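/- Exact quadrature weights satisfy the discrete kernel conditions: let γ : ℝ → ℝ be integrable and nonnegative, vanishing on (0,∞), nondecreasing on (−∞,0], convex on (−∞,0], and with ∫_{(−∞,0]} γ(z) dz = 1. For s > 0 define γ_k = ∫_{[−(k+1)s, −ks]} γ(z) dz for k ∈ ℕ. Then: (i) γ_k ≥ γ_{k+1} ≥ 0 for all k ∈ ℕ; (ii) ∑_{k=0}^∞ γ_k = 1; (iii) γ_{k−1} + γ_{k+1} ≥ 2 γ_k for all k ≥ 1; (iv) ∑_{k=0}^∞ k γ_k ≤ (1/s) ∫_{(−∞,0]} |z| γ(z) dz, the sum and integral taken in [0,∞]. -/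

import Mathlib

open MeasureTheory
open scoped ENNReal

/-- Exact quadrature weights of a nonnegative, nondecreasing, convex kernel
supported in `(−∞,0]` with unit integral satisfy: nonnegativity and
monotonicity, normalization, convexity, and the first-moment bound. -/
theorem exact_quadrature_weights_properties
    (γ : ℝ → ℝ) (hInt : Integrable γ) (hnn : ∀ z, 0 ≤ γ z)
    (hsupp : ∀ z : ℝ, 0 < z → γ z = 0)
    (hmono : MonotoneOn γ (Set.Iic (0:ℝ)))
    (hconv : ConvexOn ℝ (Set.Iic (0:ℝ)) γ)
    (hint1 : ∫ z in Set.Iic (0:ℝ), γ z = 1)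
    (s : ℝ) (hs : 0 < s)
    (γk : ℕ → ℝ)
    (hγk : ∀ k : ℕ, γk k = ∫ z in Set.Icc (-((k:ℝ)+1)*s) (-(k:ℝ)*s), γ z) :
    (∀ k : ℕ, 0 ≤ γk (k+1) ∧ γk (k+1) ≤ γk k) ∧
    HasSum γk 1 ∧
    (∀ k : ℕ, 2 * γk (k+1) ≤ γk k + γk (k+2)) ∧
    ∑' k : ℕ, ENNReal.ofReal ((k:ℝ) * γk k) ≤
      ENNReal.ofReal (1/s) * ∫⁻ z in Set.Iic (0:ℝ), ENNReal.ofReal (|z| * γ z) := by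
  have hab : ∀ k : ℕ, -((k:ℝ)+1)*s ≤ -(k:ℝ)*s := fun k => by nlinarith [hs.le, (Nat.cast_nonneg k : (0:ℝ) ≤ k)]
  set A : ℕ → Set ℝ := fun k => Set.Ioc (-((k:ℝ)+1)*s) (-(k:ℝ)*s) with hA
  have hγA : ∀ k : ℕ, γk k = ∫ z in A k, γ z := by
    intro k
    rw [hγk k, MeasureTheory.integral_Icc_eq_integral_Ioc]
  have hγI : ∀ k : ℕ, γk k = ∫ z in (-((k:ℝ)+1)*s)..(-(k:ℝ)*s), γ z := by
    intro k
    rw [hγA k, hA]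
    exact (intervalIntegral.integral_of_le (hab k)).symm
  have hAmeas : ∀ k, MeasurableSet (A k) := fun k => measurableSet_Ioc
  have hAsub : ∀ k, A k ⊆ Set.Iic (0:ℝ) := by
    intro k z hz
    have := hz.2
    simp only [Set.mem_Iic]
    nlinarith [(Nat.cast_nonneg k : (0:ℝ) ≤ k), hs.le]
  have hAdisj : Pairwise (Function.onFun Disjoint A) := by
    intro i j hij
    rw [Function.onFun, hA, Set.Ioc_disjoint_Ioc]
    rcases hij.lt_or_gt with h | h
    · have : (i:ℝ) + 1 ≤ (j:ℝ) := by exact_mod_cast h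
      calc min (-(i:ℝ)*s) (-(j:ℝ)*s) ≤ -(j:ℝ)*s := min_le_right _ _
        _ ≤ -((i:ℝ)+1)*s := by nlinarith
        _ ≤ max (-((i:ℝ)+1)*s) (-((j:ℝ)+1)*s) := le_max_left _ _
    · have : (j:ℝ) + 1 ≤ (i:ℝ) := by exact_mod_cast h
      calc min (-(i:ℝ)*s) (-(j:ℝ)*s) ≤ -(i:ℝ)*s := min_le_left _ _
        _ ≤ -((j:ℝ)+1)*s := by nlinarith
        _ ≤ max (-((i:ℝ)+1)*s) (-((j:ℝ)+1)*s) := le_max_right _ _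
  have hAunion : (⋃ k, A k) = Set.Iic (0:ℝ) := by
    apply Set.Subset.antisymm
    · exact Set.iUnion_subset hAsub
    · intro z hz
      have hz0 : z ≤ 0 := hz
      set k := ⌊(-z) / s⌋₊ with hk
      have hnz : 0 ≤ (-z) / s := div_nonneg (by linarith) hs.le
      have h1 : (k:ℝ) ≤ (-z) / s := Nat.floor_le hnz
      have h2 : (-z) / s < (k:ℝ) + 1 := Nat.lt_floor_add_one _
      have h1' : (k:ℝ) * s ≤ -z := by
        rw [← le_div_iff₀ hs]; exact h1
      have h2' : -z < ((k:ℝ)+1) * s := by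
        rw [← div_lt_iff₀ hs]; exact h2
      exact Set.mem_iUnion.2 ⟨k, by constructor <;> [nlinarith; nlinarith]⟩
  -- (i)
  have hnonneg : ∀ k : ℕ, 0 ≤ γk k := by
    intro k
    rw [hγA k]
    exact setIntegral_nonneg (hAmeas k) (fun z _ => hnn z)
  have hmonoW : ∀ k : ℕ, γk (k+1) ≤ γk k := by
    intro k
    have e1 : γk (k+1) = ∫ x in (-((k:ℝ)+1)*s)..(-(k:ℝ)*s), γ (x - s) := by
      rw [intervalIntegral.integral_comp_sub_right (fun x => γ x) s, hγI (k+1)]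
      push_cast
      ring_nf
    rw [e1, hγI k]
    apply intervalIntegral.integral_mono_on (hab k)
      ((hInt.comp_sub_right s).intervalIntegrable)
      (hInt.intervalIntegrable)
    intro x hx
    
    have hx2 : x ≤ 0 := by
      have := hx.2
      nlinarith [(Nat.cast_nonneg k : (0:ℝ) ≤ k), hs.le]
    exact hmono (show x - s ∈ Set.Iic (0:ℝ) by simp; linarith)
      (show x ∈ Set.Iic (0:ℝ) from hx2) (by linarith)
  -- (ii)
  have hIntIic : IntegrableOn γ (Set.Iic (0:ℝ)) := hInt.integrableOn
  have hsum : HasSum γk 1 := by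
    have := MeasureTheory.hasSum_integral_iUnion (μ := volume) (f := γ) hAmeas hAdisj
      (by rw [hAunion]; exact hIntIic)
    rw [hAunion, hint1] at this
    rw [show γk = fun k => ∫ z in A k, γ z from funext hγA]
    exact this
  -- (iii)
  have hconvW : ∀ k : ℕ, 2 * γk (k+1) ≤ γk k + γk (k+2) := by
    intro k
    set a : ℝ := -((k:ℝ)+2)*s with ha
    set b : ℝ := -((k:ℝ)+1)*s with hb
    have hab' : a ≤ b := by nlinarith [hs.le]
    have e0 : γk (k+1) = ∫ x in a..b, γ x := by
      rw [hγI (k+1)]; push_cast; rw [ha, hb]; ring_nf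
    have e1 : γk k = ∫ x in a..b, γ (x + s) := by
      rw [intervalIntegral.integral_comp_add_right (fun x => γ x) s, hγI k]
      push_cast; rw [ha, hb]; ring_nf
    have e2 : γk (k+2) = ∫ x in a..b, γ (x - s) := by
      rw [intervalIntegral.integral_comp_sub_right (fun x => γ x) s, hγI (k+2)]
      push_cast; rw [ha, hb]; ring_nf
    have hi1 : IntervalIntegrable (fun x => γ (x + s)) volume a b :=
      (hInt.comp_add_right s).intervalIntegrable
    have hi2 : IntervalIntegrable (fun x => γ (x - s)) volume a b :=
      (hInt.comp_sub_right s).intervalIntegrable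
    have key : ∫ x in a..b, (2 * γ x) ≤ ∫ x in a..b, (γ (x + s) + γ (x - s)) := by
      apply intervalIntegral.integral_mono_on hab'
        ((hInt.intervalIntegrable).const_mul 2) (hi1.add hi2)
      intro x hx
      have hxb : x ≤ b := hx.2
      have hxps : x + s ≤ 0 := by
        rw [hb] at hxb
        nlinarith [(Nat.cast_nonneg k : (0:ℝ) ≤ k), hs.le]
      have hxms : x - s ≤ 0 := by linarith
      have hmid : γ ((1/2 : ℝ) • (x - s) + (1/2 : ℝ) • (x + s)) ≤
          (1/2 : ℝ) * γ (x - s) + (1/2 : ℝ) * γ (x + s) :=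
        hconv.2 (Set.mem_Iic.2 hxms) (Set.mem_Iic.2 hxps)
          (by norm_num) (by norm_num) (by norm_num)
      have : (1/2 : ℝ) • (x - s) + (1/2 : ℝ) • (x + s) = x := by
        simp [smul_eq_mul]; ring
      rw [this] at hmid
      linarith
    rw [intervalIntegral.integral_const_mul] at key
    rw [intervalIntegral.integral_add hi1 hi2] at key
    rw [e0, e1, e2]
    linarith
  -- (iv)
  refine ⟨fun k => ⟨hnonneg (k+1), hmonoW k⟩, hsum, hconvW, ?_⟩
  have hmul : ∀ k : ℕ, IntegrableOn (fun z => |z| * γ z) (A k) := by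
    intro k
    apply Integrable.mono' ((hInt.integrableOn).const_mul (((k:ℝ)+1)*s))
    · exact (measurable_abs.aestronglyMeasurable.mul hInt.1).restrict
    · refine (ae_restrict_iff' (hAmeas k)).2 (ae_of_all _ ?_)
      intro z hz
      have h1 : -((k:ℝ)+1)*s < z := hz.1
      have h2 : z ≤ -(k:ℝ)*s := hz.2
      have hz0 : z ≤ 0 := by nlinarith [(Nat.cast_nonneg k : (0:ℝ) ≤ k), hs.le]
      have habs : |z| ≤ ((k:ℝ)+1)*s := by
        rw [abs_of_nonpos hz0]; linarith
      have : ‖|z| * γ z‖ = |z| * γ z := by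
        rw [Real.norm_eq_abs, abs_of_nonneg (mul_nonneg (abs_nonneg z) (hnn z))]
      rw [this]
      exact mul_le_mul_of_nonneg_right habs (hnn z)
  have hterm : ∀ k : ℕ, ENNReal.ofReal ((k:ℝ) * γk k) ≤
      ENNReal.ofReal (1/s) * ∫⁻ z in A k, ENNReal.ofReal (|z| * γ z) := by
    intro k
    have hlow : (k:ℝ) * s * γk k ≤ ∫ z in A k, |z| * γ z := by
      rw [hγA k, ← MeasureTheory.integral_const_mul]
      apply setIntegral_mono_on ((hInt.integrableOn).const_mul _) (hmul k) (hAmeas k)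
      intro z hz
      have h2 : z ≤ -(k:ℝ)*s := hz.2
      have hz0 : z ≤ 0 := by nlinarith [(Nat.cast_nonneg k : (0:ℝ) ≤ k), hs.le]
      have habs : (k:ℝ)*s ≤ |z| := by rw [abs_of_nonpos hz0]; linarith
      exact mul_le_mul_of_nonneg_right habs (hnn z)
    have hreal : (k:ℝ) * γk k ≤ (1/s) * ∫ z in A k, |z| * γ z := by
      rw [one_div, inv_mul_eq_div, le_div_iff₀ hs]
      nlinarith
    calc ENNReal.ofReal ((k:ℝ) * γk k)
        ≤ ENNReal.ofReal ((1/s) * ∫ z in A k, |z| * γ z) := ENNReal.ofReal_le_ofReal hreal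
      _ = ENNReal.ofReal (1/s) * ENNReal.ofReal (∫ z in A k, |z| * γ z) :=
          ENNReal.ofReal_mul (by positivity)
      _ = ENNReal.ofReal (1/s) * ∫⁻ z in A k, ENNReal.ofReal (|z| * γ z) := by
          rw [ofReal_integral_eq_lintegral_ofReal (hmul k)
            (ae_of_all _ (fun z => mul_nonneg (abs_nonneg z) (hnn z)))]
  calc ∑' k : ℕ, ENNReal.ofReal ((k:ℝ) * γk k)
      ≤ ∑' k : ℕ, ENNReal.ofReal (1/s) * ∫⁻ z in A k, ENNReal.ofReal (|z| * γ z) :=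
        ENNReal.tsum_le_tsum hterm
    _ = ENNReal.ofReal (1/s) * ∑' k : ℕ, ∫⁻ z in A k, ENNReal.ofReal (|z| * γ z) :=
        ENNReal.tsum_mul_left
    _ = ENNReal.ofReal (1/s) * ∫⁻ z in Set.Iic (0:ℝ), ENNReal.ofReal (|z| * γ z) := by
        rw [← hAunion, MeasureTheory.lintegral_iUnion hAmeas hAdisj]
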